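/- Let G be a hole-free and paraglider-free graph and A an induced subgraph of G isomorphic to the complement of C6. Then the set A6 of vertices outside A adjacent to all six vertices of A is a clique in G. -/

import Mathlib

open SimpleGraph

/-- `H` occurs as an induced subgraph of `G`. -/
def HasInducedCopy {V W : Type} (G : SimpleGraph V) (H : SimpleGraph W) : Prop :=
  Nonempty (H ↪g G)

/-- `G` has no induced chordless cycle with at least 5 vertices. -/
def HoleFree {V : Type} (G : SimpleGraph V) : Prop :=
  ∀ n : ℕ, 5 ≤ n → ¬ HasInducedCopy G (cycleGraph n)

/-- the disjoint union of a `P₂` and a `P₃`. -/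
def p2p3 : SimpleGraph (Fin 5) :=
  SimpleGraph.fromRel (fun i j => (i, j) ∈ ([(0,1),(2,3),(3,4)] : List (Fin 5 × Fin 5)))

/-- the paraglider: a diamond on `0,1,2,3` (missing edge `2-3`) plus vertex `4` seeing `2,3`. -/
def paraglider : SimpleGraph (Fin 5) :=
  SimpleGraph.fromRel
    (fun i j => (i, j) ∈ ([(0,1),(0,2),(0,3),(1,2),(1,3),(4,2),(4,3)] : List (Fin 5 × Fin 5)))

/-- the diamond `K₄ - e`. -/
def diamond : SimpleGraph (Fin 4) :=
  SimpleGraph.fromRel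
    (fun i j => (i, j) ∈ ([(0,1),(0,2),(0,3),(1,2),(1,3)] : List (Fin 4 × Fin 4)))

/-- three independent edges. -/
def threeK2 : SimpleGraph (Fin 6) :=
  SimpleGraph.fromRel (fun i j => (i, j) ∈ ([(0,1),(2,3),(4,5)] : List (Fin 6 × Fin 6)))

/-- the matched co-bipartite graph: two cliques of size `k` joined by a perfect matching. -/
def matchedCoBip (k : ℕ) : SimpleGraph (Fin k ⊕ Fin k) :=
  SimpleGraph.fromRel (fun x y =>
    (∃ i j, x = Sum.inl i ∧ y = Sum.inl j) ∨ (∃ i j, x = Sum.inr i ∧ y = Sum.inr j) ∨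
    (∃ i, x = Sum.inl i ∧ y = Sum.inr i))

/-- `G` has no induced hole and no induced antihole. -/
def WeaklyChordal {V : Type} (G : SimpleGraph V) : Prop :=
  ∀ n : ℕ, 5 ≤ n →
    ¬ HasInducedCopy G (cycleGraph n) ∧ ¬ HasInducedCopy G (cycleGraph n)ᶜ

/-- a clique `K` whose removal disconnects the graph. -/
def HasCliqueSeparator {V : Type} (G : SimpleGraph V) : Prop :=
  ∃ K : Set V, G.IsClique K ∧ ¬ (G.induce Kᶜ).Preconnected

/-- an atom: a connected graph with no clique separator. -/
def IsAtomGraph {V : Type} (G : SimpleGraph V) : Prop :=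
  G.Connected ∧ ¬ HasCliqueSeparator G

set_option maxHeartbeats 1000000 in
/-- the set `A₆` of vertices outside `A` seeing all of `A` is a clique. -/
theorem A6_clique {V : Type} (G : SimpleGraph V)
    (hHole : HoleFree G) (hPara : ¬ HasInducedCopy G paraglider)
    (f : (cycleGraph 6)ᶜ ↪g G) :
    G.IsClique {v : V | v ∉ Set.range ⇑f ∧ ∀ i : Fin 6, G.Adj v (f i)} := by
  intro u hu v hv huv
  by_contra hadj
  apply hPara
  obtain ⟨hu1, hu2⟩ := hu
  obtain ⟨hv1, hv2⟩ := hv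
  have hA : ∀ i j : Fin 6, (cycleGraph 6)ᶜ.Adj i j ↔ G.Adj (f i) (f j) :=
    fun i j => f.map_adj_iff.symm
  have h02 : G.Adj (f 0) (f 2) := (hA 0 2).1 (by decide)
  have h01 : ¬ G.Adj (f 0) (f 1) := fun h => (by decide : ¬(cycleGraph 6)ᶜ.Adj 0 1) ((hA 0 1).2 h)
  have h21 : ¬ G.Adj (f 2) (f 1) := fun h => (by decide : ¬(cycleGraph 6)ᶜ.Adj 2 1) ((hA 2 1).2 h)
  have hnu : ∀ i : Fin 6, u ≠ f i := fun i h => hu1 ⟨i, h.symm⟩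
  have hnv : ∀ i : Fin 6, v ≠ f i := fun i h => hv1 ⟨i, h.symm⟩
  have hf : ∀ i j : Fin 6, i ≠ j → f i ≠ f j := fun i j hij h => hij (f.injective h)
  have hadj' : ¬ G.Adj v u := fun h => hadj h.symm
  have n1 : f 0 ≠ f 2 := hf 0 2 (by decide)
  have n2 : f 0 ≠ f 1 := hf 0 1 (by decide)
  have n3 : f 2 ≠ f 1 := hf 2 1 (by decide)
  refine ⟨⟨⟨![f 0, f 2, u, v, f 1], ?_⟩, ?_⟩⟩
  · intro a b hab
    fin_cases a <;> fin_cases b <;>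
      simp only [Fin.mk_zero, Fin.mk_one, Fin.reduceFinMk, Matrix.cons_val_zero,
        Matrix.cons_val_one, Matrix.head_cons, Matrix.cons_val_two, Matrix.tail_cons,
        Matrix.cons_val_three, Matrix.cons_val_four, Matrix.cons_val_succ,
        Matrix.head_fin_const] at hab <;>
      first
        | rfl
        | exact absurd hab n1 | exact absurd hab n1.symm
        | exact absurd hab n2 | exact absurd hab n2.symm
        | exact absurd hab n3 | exact absurd hab n3.symm
        | exact absurd hab huv | exact absurd hab (Ne.symm huv)
        | exact absurd hab (hnu 0) | exact absurd hab (hnu 0).symm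
        | exact absurd hab (hnu 1) | exact absurd hab (hnu 1).symm
        | exact absurd hab (hnu 2) | exact absurd hab (hnu 2).symm
        | exact absurd hab (hnv 0) | exact absurd hab (hnv 0).symm
        | exact absurd hab (hnv 1) | exact absurd hab (hnv 1).symm
        | exact absurd hab (hnv 2) | exact absurd hab (hnv 2).symm
  · intro a b
    fin_cases a <;> fin_cases b <;>
      simp only [Fin.mk_zero, Fin.mk_one, Fin.reduceFinMk, Function.Embedding.coeFn_mk,
        Matrix.cons_val_zero, Matrix.cons_val_one, Matrix.head_cons, Matrix.cons_val_two,
        Matrix.tail_cons, Matrix.cons_val_three, Matrix.cons_val_four, Matrix.cons_val_succ,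
        Matrix.head_fin_const] <;>
      first
        | exact iff_of_true h02 (by simp only [paraglider, fromRel_adj] <;> decide)
        | exact iff_of_true h02.symm (by simp only [paraglider, fromRel_adj] <;> decide)
        | exact iff_of_true (hu2 0) (by simp only [paraglider, fromRel_adj] <;> decide)
        | exact iff_of_true (hu2 1) (by simp only [paraglider, fromRel_adj] <;> decide)
        | exact iff_of_true (hu2 2) (by simp only [paraglider, fromRel_adj] <;> decide)
        | exact iff_of_true (hu2 0).symm (by simp only [paraglider, fromRel_adj] <;> decide)
        | exact iff_of_true (hu2 1).symm (by simp only [paraglider, fromRel_adj] <;> decide)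
        | exact iff_of_true (hu2 2).symm (by simp only [paraglider, fromRel_adj] <;> decide)
        | exact iff_of_true (hv2 0) (by simp only [paraglider, fromRel_adj] <;> decide)
        | exact iff_of_true (hv2 1) (by simp only [paraglider, fromRel_adj] <;> decide)
        | exact iff_of_true (hv2 2) (by simp only [paraglider, fromRel_adj] <;> decide)
        | exact iff_of_true (hv2 0).symm (by simp only [paraglider, fromRel_adj] <;> decide)
        | exact iff_of_true (hv2 1).symm (by simp only [paraglider, fromRel_adj] <;> decide)
        | exact iff_of_true (hv2 2).symm (by simp only [paraglider, fromRel_adj] <;> decide)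
        | exact iff_of_false G.irrefl (by simp only [paraglider, fromRel_adj] <;> decide)
        | exact iff_of_false h01 (by simp only [paraglider, fromRel_adj] <;> decide)
        | exact iff_of_false (fun h => h01 h.symm) (by simp only [paraglider, fromRel_adj] <;> decide)
        | exact iff_of_false h21 (by simp only [paraglider, fromRel_adj] <;> decide)
        | exact iff_of_false (fun h => h21 h.symm) (by simp only [paraglider, fromRel_adj] <;> decide)
        | exact iff_of_false hadj (by simp only [paraglider, fromRel_adj] <;> decide)
        | exact iff_of_false hadj' (by simp only [paraglider, fromRel_adj] <;> decide)
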